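/- Let ξ_d < 0, τ₀ > 0 and β > 0. Define H_d(τ,τ') := −(1/2)|ξ_d|^{−1/2} e^{−|ξ_d|^{1/2}|τ−τ'|} and, for continuous f : [τ₀,∞) → ℝ with sup_{τ ≥ τ₀} τ^β |f(τ)| < ∞, define (𝓗_d f)(τ) := ∫_{τ₀}^∞ H_d(τ,τ') f(τ') dτ'. Then there is a constant C (depending on ξ_d, β, τ₀) such that sup_{τ ≥ τ₀} τ^β |𝓗_d f(τ)| ≤ C sup_{τ ≥ τ₀} τ^β |f(τ)| and sup_{τ ≥ τ₀} τ^β |(𝓗_d f)'(τ)| ≤ C sup_{τ ≥ τ₀} τ^β |f(τ)|. -/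

import Mathlib

noncomputable section

open Real MeasureTheory

set_option maxHeartbeats 2000000

lemma exp_lip_aux {a b c : ℝ} (ha : c ≤ a) (hb : c ≤ b) :
    |Real.exp (-a) - Real.exp (-b)| ≤ Real.exp (-c) * |a - b| := by
  wlog hab : a ≤ b generalizing a b
  · rw [abs_sub_comm, abs_sub_comm a b]; exact this hb ha (le_of_not_ge hab)
  have h1 : Real.exp (-b) ≤ Real.exp (-a) := Real.exp_le_exp.2 (by linarith)
  rw [abs_of_nonneg (by linarith), abs_of_nonpos (by linarith)]
  have heq : Real.exp (-a) - Real.exp (-b) = Real.exp (-a) * (1 - Real.exp (-(b - a))) := by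
    rw [mul_sub, mul_one, ← Real.exp_add]; ring_nf
  rw [heq]
  have h2 : 1 - Real.exp (-(b - a)) ≤ b - a := by
    have := Real.add_one_le_exp (-(b - a)); linarith
  have h4 : 0 ≤ 1 - Real.exp (-(b - a)) := by
    have : Real.exp (-(b - a)) ≤ 1 := Real.exp_le_one_iff.2 (by linarith)
    linarith
  have h3 : Real.exp (-a) ≤ Real.exp (-c) := Real.exp_le_exp.2 (by linarith)
  calc Real.exp (-a) * (1 - Real.exp (-(b - a))) ≤ Real.exp (-c) * (b - a) :=
        mul_le_mul h3 h2 h4 (Real.exp_nonneg _)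
    _ = Real.exp (-c) * -(a - b) := by ring

lemma rpow_exp_aux {β c t : ℝ} (hβ : 0 < β) (hc : 0 < c) (ht : 0 ≤ t) :
    t ^ β * Real.exp (-(c * t)) ≤ c ^ (-β) * (Nat.ceil β).factorial := by
  rcases eq_or_lt_of_le ht with h0 | ht
  · rw [← h0, Real.zero_rpow hβ.ne', zero_mul]; positivity
  set n := Nat.ceil β with hn
  have hnβ : β ≤ (n : ℝ) := Nat.le_ceil β
  have key : ∀ s : ℝ, 0 < s → s ^ β * Real.exp (-s) ≤ (n.factorial : ℝ) := by
    intro s hs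
    have hfac : (1 : ℝ) ≤ (n.factorial : ℝ) := by exact_mod_cast Nat.one_le_iff_ne_zero.2 (Nat.factorial_pos n).ne'
    rcases le_or_gt 1 s with h1 | h1
    · have h2 : s ^ β ≤ s ^ (n : ℝ) := Real.rpow_le_rpow_of_exponent_le h1 hnβ
      have h3 : s ^ (n : ℝ) = s ^ n := Real.rpow_natCast s n
      have h4 : s ^ n / n.factorial ≤ Real.exp s := by
        calc (s : ℝ) ^ n / n.factorial ≤ ∑ i ∈ Finset.range (n + 1), s ^ i / i.factorial := by
              exact Finset.single_le_sum (f := fun i => s ^ i / (i.factorial : ℝ))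
                (fun i _ => by positivity) (Finset.self_mem_range_succ n)
          _ ≤ Real.exp s := Real.sum_le_exp_of_nonneg (by linarith) _
      have h5 : s ^ n ≤ n.factorial * Real.exp s := by
        rw [div_le_iff₀ (by positivity)] at h4; linarith [h4]
      calc s ^ β * Real.exp (-s) ≤ s ^ n * Real.exp (-s) := by
            rw [← h3]; exact mul_le_mul_of_nonneg_right h2 (Real.exp_nonneg _)
        _ ≤ (n.factorial * Real.exp s) * Real.exp (-s) := mul_le_mul_of_nonneg_right h5 (Real.exp_nonneg _)
        _ = n.factorial := by rw [mul_assoc, ← Real.exp_add]; simp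
    · have h2 : s ^ β ≤ 1 := Real.rpow_le_one hs.le h1.le hβ.le
      have h3 : Real.exp (-s) ≤ 1 := Real.exp_le_one_iff.2 (by linarith)
      nlinarith [Real.exp_nonneg (-s), Real.rpow_nonneg hs.le β]
  have hs := key (c * t) (by positivity)
  have hct : t ^ β = c ^ (-β) * (c * t) ^ β := by
    rw [Real.mul_rpow hc.le ht.le, ← mul_assoc, ← Real.rpow_add hc]
    simp
  rw [hct, mul_assoc]
  have : 0 ≤ c ^ (-β) := Real.rpow_nonneg hc.le _
  exact mul_le_mul_of_nonneg_left hs this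

lemma integrable_exp_abs_aux (τ τ₀ : ℝ) {c : ℝ} (hc : 0 < c) :
    IntegrableOn (fun x : ℝ => Real.exp (-c * |τ - x|)) (Set.Ioi τ₀) := by
  have base : IntegrableOn (fun x : ℝ => Real.exp (c * τ) * Real.exp (-c * x)) (Set.Ioi τ₀) :=
    (exp_neg_integrableOn_Ioi τ₀ hc).const_mul _
  refine base.mono' ?_ ?_
  · exact (Real.continuous_exp.comp
      ((continuous_const.mul ((continuous_const.sub continuous_id).abs)))).aestronglyMeasurable
  · refine Filter.Eventually.of_forall fun x => ?_
    rw [Real.norm_eq_abs, abs_of_nonneg (Real.exp_nonneg _), ← Real.exp_add]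
    apply Real.exp_le_exp.2
    have := neg_abs_le (τ - x)
    nlinarith

lemma integral_exp_abs_aux {c τ τ₀ : ℝ} (hc : 0 < c) (h : τ₀ ≤ τ) :
    (∫ x in Set.Ioi τ₀, Real.exp (-c * |τ - x|)) ≤ 2 / c := by
  have hsplit : Set.Ioc τ₀ τ ∪ Set.Ioi τ = Set.Ioi τ₀ := Set.Ioc_union_Ioi_eq_Ioi h
  have hint := integrable_exp_abs_aux τ τ₀ hc
  have hint1 : IntegrableOn (fun x : ℝ => Real.exp (-c * |τ - x|)) (Set.Ioc τ₀ τ) :=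
    hint.mono_set (by rw [← hsplit]; exact Set.subset_union_left)
  have hint2 : IntegrableOn (fun x : ℝ => Real.exp (-c * |τ - x|)) (Set.Ioi τ) :=
    hint.mono_set (by rw [← hsplit]; exact Set.subset_union_right)
  rw [← hsplit, setIntegral_union (Set.Ioc_disjoint_Ioi le_rfl) measurableSet_Ioi hint1 hint2]
  have e1 : (∫ x in Set.Ioc τ₀ τ, Real.exp (-c * |τ - x|)) ≤ 1 / c := by
    have heq : (∫ x in Set.Ioc τ₀ τ, Real.exp (-c * |τ - x|))
        = ∫ x in τ₀..τ, Real.exp (c * x - c * τ) := by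
      rw [intervalIntegral.integral_of_le h]
      refine setIntegral_congr_fun measurableSet_Ioc fun x hx => ?_
      rw [abs_of_nonneg (by linarith [hx.2] : (0:ℝ) ≤ τ - x)]
      ring_nf
    rw [heq]
    have hftc : ∫ x in τ₀..τ, Real.exp (c * x - c * τ)
        = Real.exp (c * τ - c * τ) / c - Real.exp (c * τ₀ - c * τ) / c := by
      refine intervalIntegral.integral_eq_sub_of_hasDerivAt (f := fun x => Real.exp (c * x - c * τ) / c) (fun x _ => ?_) ?_
      · have hd := (((hasDerivAt_id x).const_mul c).sub_const (c * τ)).exp.div_const c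
        refine hd.congr_deriv ?_
        simp [hc.ne']
      · exact (Real.continuous_exp.comp
          ((continuous_const.mul continuous_id).sub continuous_const)).intervalIntegrable _ _
    rw [hftc]
    have : 0 ≤ Real.exp (c * τ₀ - c * τ) / c := by positivity
    simp only [sub_self, Real.exp_zero]
    linarith [this]
  have e2 : (∫ x in Set.Ioi τ, Real.exp (-c * |τ - x|)) ≤ 1 / c := by
    have heq : (∫ x in Set.Ioi τ, Real.exp (-c * |τ - x|))
        = ∫ x in Set.Ioi τ, Real.exp (c * τ - c * x) := by
      refine setIntegral_congr_fun measurableSet_Ioi fun x hx => ?_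
      rw [abs_of_nonpos (by simp only [Set.mem_Ioi] at hx; linarith : τ - x ≤ 0)]
      ring_nf
    rw [heq]
    have htend : Filter.Tendsto (fun x : ℝ => -Real.exp (c * τ - c * x) / c)
        Filter.atTop (nhds 0) := by
      have h1 : Filter.Tendsto (fun x : ℝ => c * τ - c * x) Filter.atTop Filter.atBot := by
        have hneg := Filter.tendsto_neg_atTop_atBot.comp (Filter.tendsto_id.const_mul_atTop hc)
        have h1' := Filter.tendsto_atBot_add_const_left Filter.atTop (c * τ) hneg
        exact h1'.congr (fun x => by simp only [Function.comp_apply, id_eq]; ring)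
      have h2 : Filter.Tendsto (fun x : ℝ => Real.exp (c * τ - c * x)) Filter.atTop (nhds 0) :=
        Real.tendsto_exp_atBot.comp h1
      have := (h2.neg).div_const c
      simpa using this
    have hcont : ContinuousWithinAt (fun x => -Real.exp (c * τ - c * x) / c) (Set.Ici τ) τ :=
      ((Real.continuous_exp.comp
        (continuous_const.sub (continuous_const.mul continuous_id))).neg.div_const c).continuousWithinAt
    have hderiv : ∀ x ∈ Set.Ioi τ, HasDerivAt (fun x => -Real.exp (c * τ - c * x) / c)
        (Real.exp (c * τ - c * x)) x := by
      intro x _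
      have h0 : HasDerivAt (fun y : ℝ => c * τ - c * y) (-c) x := by
        simpa using ((hasDerivAt_id x).const_mul c).const_sub (c * τ)
      have h1 := (h0.exp.neg).div_const c
      have h2 : -(Real.exp (c * τ - c * x) * -c) / c = Real.exp (c * τ - c * x) := by
        field_simp
      rw [h2] at h1
      exact h1
    have hint2' : IntegrableOn (fun x => Real.exp (c * τ - c * x)) (Set.Ioi τ) := by
      refine hint2.congr_fun (fun x hx => ?_) measurableSet_Ioi
      dsimp only
      rw [abs_of_nonpos (by simp only [Set.mem_Ioi] at hx; linarith : τ - x ≤ 0)]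
      ring_nf
    have hval := integral_Ioi_of_hasDerivAt_of_tendsto hcont hderiv hint2' htend
    rw [hval]
    rw [sub_self, Real.exp_zero]
    rw [zero_sub, neg_div, neg_neg, one_div]
  have h2c : 1 / c + 1 / c = 2 / c := by ring
  linarith [e1, e2]

lemma key_integral_bound (μ τ₀ β : ℝ) (hμ : 0 < μ) (hτ₀ : 0 < τ₀) (hβ : 0 < β) :
    ∃ K : ℝ, 0 ≤ K ∧ ∀ f : ℝ → ℝ, ContinuousOn f (Set.Ici τ₀) →
      ∀ M : ℝ, 0 ≤ M → (∀ τ : ℝ, τ₀ ≤ τ → |f τ| ≤ M * τ ^ (-β)) →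
      ∀ τ : ℝ, τ₀ ≤ τ →
        (∫ x in Set.Ioi τ₀, Real.exp (-μ * |τ - x|) * |f x|) ≤ K * M * τ ^ (-β) := by
  set fac : ℝ := ((Nat.ceil β).factorial : ℝ) with hfac
  have hfac0 : (0:ℝ) < fac := by
    rw [hfac]; exact_mod_cast Nat.factorial_pos _
  set K₀ : ℝ := 2 ^ β + τ₀ ^ (-β) * ((μ/4) ^ (-β) * fac) with hK₀
  have hK₀0 : 0 ≤ K₀ := by
    rw [hK₀]; positivity
  refine ⟨K₀ * (4/μ), by positivity, ?_⟩
  intro f hf M hM hfM τ hτ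
  have hτpos : 0 < τ := lt_of_lt_of_le hτ₀ hτ
  have hpt : ∀ x ∈ Set.Ioi τ₀, Real.exp (-μ * |τ - x|) * |f x|
      ≤ (K₀ * M * τ ^ (-β)) * Real.exp (-(μ/2) * |τ - x|) := by
    intro x hx
    rw [Set.mem_Ioi] at hx
    have hx0 : 0 < x := hτ₀.trans hx
    have hfx : |f x| ≤ M * x ^ (-β) := hfM x hx.le
    have hsplitexp : Real.exp (-μ * |τ - x|)
        = Real.exp (-(μ/2) * |τ - x|) * Real.exp (-(μ/2) * |τ - x|) := by
      rw [← Real.exp_add]; ring_nf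
    have hsuff : Real.exp (-(μ/2) * |τ - x|) * x ^ (-β) ≤ K₀ * τ ^ (-β) := by
      rcases le_or_gt (τ/2) x with hcase | hcase
      · have h1 : x ^ (-β) ≤ (τ/2) ^ (-β) :=
          Real.rpow_le_rpow_of_nonpos (by positivity) hcase (by linarith)
        have h2 : (τ/2) ^ (-β) = 2 ^ β * τ ^ (-β) := by
          rw [Real.div_rpow hτpos.le (by norm_num : (0:ℝ) ≤ 2),
            Real.rpow_neg (by norm_num : (0:ℝ) ≤ 2)]
          field_simp
        have h3 : Real.exp (-(μ/2) * |τ - x|) ≤ 1 := by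
          rw [Real.exp_le_one_iff]
          have : 0 ≤ (μ/2) * |τ - x| := by positivity
          linarith
        calc Real.exp (-(μ/2) * |τ - x|) * x ^ (-β)
            ≤ 1 * (2 ^ β * τ ^ (-β)) :=
              mul_le_mul h3 (h1.trans (le_of_eq h2)) (Real.rpow_nonneg hx0.le _) (by norm_num)
          _ = 2 ^ β * τ ^ (-β) := by ring
          _ ≤ K₀ * τ ^ (-β) := by
              refine mul_le_mul_of_nonneg_right ?_ (Real.rpow_nonneg hτpos.le _)
              rw [hK₀]
              have : 0 ≤ τ₀ ^ (-β) * ((μ/4) ^ (-β) * fac) := by positivity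
              linarith
      · have hd : |τ - x| = τ - x := abs_of_nonneg (by linarith)
        have h1 : Real.exp (-(μ/2) * |τ - x|) ≤ Real.exp (-((μ/4) * τ)) := by
          apply Real.exp_le_exp.2
          rw [hd]; nlinarith
        have h2 : Real.exp (-((μ/4) * τ)) ≤ ((μ/4) ^ (-β) * fac) * τ ^ (-β) := by
          have hkey := rpow_exp_aux hβ (by linarith : (0:ℝ) < μ/4) hτpos.le
          have hτβ : 0 < τ ^ β := Real.rpow_pos_of_pos hτpos β
          calc Real.exp (-((μ/4) * τ))
              = (τ ^ β * Real.exp (-((μ/4) * τ))) * τ ^ (-β) := by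
                rw [Real.rpow_neg hτpos.le]; field_simp
            _ ≤ ((μ/4) ^ (-β) * fac) * τ ^ (-β) :=
                mul_le_mul_of_nonneg_right hkey (Real.rpow_nonneg hτpos.le _)
        have h3 : x ^ (-β) ≤ τ₀ ^ (-β) :=
          Real.rpow_le_rpow_of_nonpos hτ₀ hx.le (by linarith)
        calc Real.exp (-(μ/2) * |τ - x|) * x ^ (-β)
            ≤ (((μ/4) ^ (-β) * fac) * τ ^ (-β)) * τ₀ ^ (-β) :=
              mul_le_mul (h1.trans h2) h3 (Real.rpow_nonneg hx0.le _) (by positivity)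
          _ = (τ₀ ^ (-β) * ((μ/4) ^ (-β) * fac)) * τ ^ (-β) := by ring
          _ ≤ K₀ * τ ^ (-β) := by
              refine mul_le_mul_of_nonneg_right ?_ (Real.rpow_nonneg hτpos.le _)
              rw [hK₀]
              have : (0:ℝ) ≤ 2 ^ β := by positivity
              linarith
    calc Real.exp (-μ * |τ - x|) * |f x|
        ≤ Real.exp (-μ * |τ - x|) * (M * x ^ (-β)) :=
          mul_le_mul_of_nonneg_left hfx (Real.exp_nonneg _)
      _ = (M * (Real.exp (-(μ/2) * |τ - x|) * x ^ (-β))) * Real.exp (-(μ/2) * |τ - x|) := by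
          rw [hsplitexp]; ring
      _ ≤ (M * (K₀ * τ ^ (-β))) * Real.exp (-(μ/2) * |τ - x|) :=
          mul_le_mul_of_nonneg_right (mul_le_mul_of_nonneg_left hsuff hM) (Real.exp_nonneg _)
      _ = (K₀ * M * τ ^ (-β)) * Real.exp (-(μ/2) * |τ - x|) := by ring
  have hmaj : Integrable (fun x => (K₀ * M * τ ^ (-β)) * Real.exp (-(μ/2) * |τ - x|))
      (volume.restrict (Set.Ioi τ₀)) :=
    (integrable_exp_abs_aux τ τ₀ (by linarith : (0:ℝ) < μ/2)).const_mul _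
  have hle : (∫ x in Set.Ioi τ₀, Real.exp (-μ * |τ - x|) * |f x|)
      ≤ ∫ x in Set.Ioi τ₀, (K₀ * M * τ ^ (-β)) * Real.exp (-(μ/2) * |τ - x|) := by
    refine integral_mono_of_nonneg ?_ hmaj ?_
    · exact Filter.Eventually.of_forall fun x => by positivity
    · exact (ae_restrict_iff' measurableSet_Ioi).2 (Filter.Eventually.of_forall hpt)
  have heval : (∫ x in Set.Ioi τ₀, (K₀ * M * τ ^ (-β)) * Real.exp (-(μ/2) * |τ - x|))
      ≤ (K₀ * M * τ ^ (-β)) * (2 / (μ/2)) := by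
    rw [MeasureTheory.integral_const_mul]
    exact mul_le_mul_of_nonneg_left (integral_exp_abs_aux (by linarith : (0:ℝ) < μ/2) hτ)
      (by positivity)
  have : (K₀ * M * τ ^ (-β)) * (2 / (μ/2)) = K₀ * (4/μ) * M * τ ^ (-β) := by
    field_simp; ring
  linarith

/-- The kernel `H_d(τ,τ') = -(1/2)|ξ_d|^{-1/2}e^{-|ξ_d|^{1/2}|τ-τ'|}`. -/
def Hd (ξd τ τ' : ℝ) : ℝ :=
  -(1 / 2) * |ξd| ^ (-(1 : ℝ) / 2) * Real.exp (-(|ξd| ^ ((1 : ℝ) / 2)) * |τ - τ'|)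

/-- The solution operator `(𝓗_d f)(τ) = ∫_{τ₀}^∞ H_d(τ,τ')f(τ')dτ'`. -/
def Hdop (ξd τ₀ : ℝ) (f : ℝ → ℝ) (τ : ℝ) : ℝ :=
  ∫ τ' in Set.Ioi τ₀, Hd ξd τ τ' * f τ'

/-- **Lemma 3.11**: the solution operator `𝓗_d` for the discrete mode preserves
polynomial decay: `sup τ^β|𝓗_d f| ≲ sup τ^β|f|` and `sup τ^β|(𝓗_d f)'| ≲ sup τ^β|f|`. -/
theorem discrete_mode_operator_bounds (ξd τ₀ β : ℝ)
    (hξd : ξd < 0) (hτ₀ : 0 < τ₀) (hβ : 0 < β) :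
    ∃ C : ℝ, ∀ f : ℝ → ℝ, ContinuousOn f (Set.Ici τ₀) →
      ∀ M : ℝ, (∀ τ : ℝ, τ₀ ≤ τ → τ ^ β * |f τ| ≤ M) →
        (∀ τ : ℝ, τ₀ ≤ τ → τ ^ β * |Hdop ξd τ₀ f τ| ≤ C * M) ∧
        (∀ τ : ℝ, τ₀ ≤ τ → τ ^ β * |deriv (Hdop ξd τ₀ f) τ| ≤ C * M) := by
  have hξd0 : (0:ℝ) < |ξd| := abs_pos.2 hξd.ne
  set μ : ℝ := |ξd| ^ ((1 : ℝ) / 2) with hμdef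
  set A : ℝ := (1 / 2) * |ξd| ^ (-(1 : ℝ) / 2) with hAdef
  have hμ : 0 < μ := Real.rpow_pos_of_pos hξd0 _
  have hA : 0 < A := by
    rw [hAdef]
    have := Real.rpow_pos_of_pos hξd0 (-(1:ℝ)/2)
    linarith
  have hHd : ∀ x a : ℝ, Hd ξd x a = -A * Real.exp (-μ * |x - a|) := by
    intro x a
    rw [Hd, hAdef, hμdef]
    ring_nf
  obtain ⟨K, hK0, hK⟩ := key_integral_bound μ τ₀ β hμ hτ₀ hβ
  refine ⟨A * K * (1 + μ), ?_⟩
  intro f hf M hM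
  -- basic facts about f and M
  have hM0 : 0 ≤ M := by
    have h1 := hM τ₀ le_rfl
    have h2 : 0 ≤ τ₀ ^ β * |f τ₀| := by positivity
    linarith
  have hfM' : ∀ τ : ℝ, τ₀ ≤ τ → |f τ| ≤ M * τ ^ (-β) := by
    intro τ hτ
    have hτpos : 0 < τ := lt_of_lt_of_le hτ₀ hτ
    have hτβ : 0 < τ ^ β := Real.rpow_pos_of_pos hτpos β
    have h1 := hM τ hτ
    rw [Real.rpow_neg hτpos.le]
    have h2 : |f τ| ≤ M / τ ^ β := (le_div_iff₀' hτβ).2 h1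
    rw [div_eq_mul_inv] at h2
    exact h2
  have hKf := hK f hf M hM0 hfM'
  constructor
  · -- bound on Hdop itself
    intro τ hτ
    have hτpos : 0 < τ := lt_of_lt_of_le hτ₀ hτ
    have habs : |Hdop ξd τ₀ f τ| ≤ A * (K * M * τ ^ (-β)) := by
      have h1 : |Hdop ξd τ₀ f τ| ≤ ∫ a in Set.Ioi τ₀, ‖Hd ξd τ a * f a‖ := by
        have hn := norm_integral_le_integral_norm (μ := volume.restrict (Set.Ioi τ₀))
          (f := fun a => Hd ξd τ a * f a)
        rw [Real.norm_eq_abs] at hn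
        exact hn
      have h2 : (∫ a in Set.Ioi τ₀, ‖Hd ξd τ a * f a‖)
          = ∫ a in Set.Ioi τ₀, A * (Real.exp (-μ * |τ - a|) * |f a|) := by
        refine integral_congr_ae (Filter.Eventually.of_forall fun a => ?_)
        dsimp only
        rw [Real.norm_eq_abs, abs_mul, hHd, abs_mul, abs_neg, abs_of_nonneg hA.le,
          abs_of_nonneg (Real.exp_nonneg _), mul_assoc]
      have h3 : (∫ a in Set.Ioi τ₀, A * (Real.exp (-μ * |τ - a|) * |f a|))
          = A * ∫ a in Set.Ioi τ₀, Real.exp (-μ * |τ - a|) * |f a| := by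
        rw [MeasureTheory.integral_const_mul]
      rw [h2, h3] at h1
      exact h1.trans (mul_le_mul_of_nonneg_left (hKf τ hτ) hA.le)
    have hτβ : 0 < τ ^ β := Real.rpow_pos_of_pos hτpos β
    have := mul_le_mul_of_nonneg_left habs hτβ.le
    have heq : τ ^ β * (A * (K * M * τ ^ (-β))) = A * K * M := by
      rw [Real.rpow_neg hτpos.le]
      field_simp
    rw [heq] at this
    calc τ ^ β * |Hdop ξd τ₀ f τ| ≤ A * K * M := this
      _ ≤ A * K * (1 + μ) * M := by
          nlinarith [mul_nonneg (mul_nonneg (mul_nonneg hA.le hK0) hM0) hμ.le]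
  · -- bound on the derivative
    intro τ hτ
    have hτpos : 0 < τ := lt_of_lt_of_le hτ₀ hτ
    set g : ℝ → ℝ := fun a =>
      (if a < τ then (1:ℝ) else -1) * (A * μ * Real.exp (-μ * |τ - a|) * f a) with hgdef
    set bound : ℝ → ℝ := fun a =>
      A * μ * Real.exp μ * Real.exp (-μ * |τ - a|) * |f a| with hbdef
    have hfIoi : ContinuousOn f (Set.Ioi τ₀) := hf.mono Set.Ioi_subset_Ici_self
    have hexpcont : ∀ x : ℝ, Continuous fun a : ℝ => Real.exp (-μ * |x - a|) :=
      fun x => Real.continuous_exp.comp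
        (continuous_const.mul ((continuous_const.sub continuous_id).abs))
    have hmeasF : ∀ x : ℝ, AEStronglyMeasurable (fun a => Hd ξd x a * f a)
        (volume.restrict (Set.Ioi τ₀)) := by
      intro x
      have hco : ContinuousOn (fun a => (-A * Real.exp (-μ * |x - a|)) * f a) (Set.Ioi τ₀) :=
        ((continuous_const.mul (hexpcont x)).continuousOn).mul hfIoi
      have heqf : (fun a => Hd ξd x a * f a)
          = fun a => (-A * Real.exp (-μ * |x - a|)) * f a :=
        funext fun a => by rw [hHd]
      rw [heqf]
      exact hco.aestronglyMeasurable measurableSet_Ioi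
    have hintmaj : ∀ c : ℝ, Integrable
        (fun a => c * Real.exp (-μ * |τ - a|)) (volume.restrict (Set.Ioi τ₀)) :=
      fun c => (integrable_exp_abs_aux τ τ₀ hμ).const_mul c
    have hfbdd : ∀ a ∈ Set.Ioi τ₀, |f a| ≤ M * τ₀ ^ (-β) := by
      intro a ha
      rw [Set.mem_Ioi] at ha
      have h1 := hfM' a ha.le
      have h2 : a ^ (-β) ≤ τ₀ ^ (-β) :=
        Real.rpow_le_rpow_of_nonpos hτ₀ ha.le (by linarith)
      nlinarith [mul_le_mul_of_nonneg_left h2 hM0]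
    have hF_int : Integrable (fun a => Hd ξd τ a * f a) (volume.restrict (Set.Ioi τ₀)) := by
      refine (hintmaj (A * (M * τ₀ ^ (-β)))).mono' (hmeasF τ) ?_
      refine (ae_restrict_iff' measurableSet_Ioi).2 (Filter.Eventually.of_forall fun a ha => ?_)
      rw [Real.norm_eq_abs, abs_mul, hHd, abs_mul, abs_neg, abs_of_nonneg hA.le,
        abs_of_nonneg (Real.exp_nonneg _)]
      have h1 := hfbdd a ha
      have h2 : (0:ℝ) ≤ Real.exp (-μ * |τ - a|) := Real.exp_nonneg _
      nlinarith [mul_le_mul_of_nonneg_left h1 (mul_nonneg hA.le h2)]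
    have hg_meas : AEStronglyMeasurable g (volume.restrict (Set.Ioi τ₀)) := by
      rw [hgdef]
      refine AEStronglyMeasurable.mul ?_ ?_
      · exact ((Measurable.ite measurableSet_Iio measurable_const
          measurable_const).aestronglyMeasurable)
      · have : ContinuousOn (fun a => A * μ * Real.exp (-μ * |τ - a|) * f a) (Set.Ioi τ₀) :=
          ((continuous_const.mul (hexpcont τ)).continuousOn).mul hfIoi
        exact this.aestronglyMeasurable measurableSet_Ioi
    have hbound_int : Integrable bound (volume.restrict (Set.Ioi τ₀)) := by
      refine (hintmaj (A * μ * Real.exp μ * (M * τ₀ ^ (-β)))).mono' ?_ ?_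
      · rw [hbdef]
        have : ContinuousOn (fun a => A * μ * Real.exp μ * Real.exp (-μ * |τ - a|) * |f a|)
            (Set.Ioi τ₀) := ((continuous_const.mul (hexpcont τ)).continuousOn).mul hfIoi.abs
        exact this.aestronglyMeasurable measurableSet_Ioi
      · refine (ae_restrict_iff' measurableSet_Ioi).2 (Filter.Eventually.of_forall fun a ha => ?_)
        rw [hbdef, Real.norm_eq_abs]
        have h1 := hfbdd a ha
        have h2 : (0:ℝ) ≤ Real.exp (-μ * |τ - a|) := Real.exp_nonneg _
        have h3 : (0:ℝ) ≤ Real.exp μ := Real.exp_nonneg _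
        have h4 : (0:ℝ) ≤ A * μ * Real.exp μ * Real.exp (-μ * |τ - a|) * |f a| := by positivity
        rw [abs_of_nonneg h4]
        nlinarith [mul_le_mul_of_nonneg_left h1
          (by positivity : (0:ℝ) ≤ A * μ * Real.exp μ * Real.exp (-μ * |τ - a|))]
    have h_lip : ∀ᵐ a ∂(volume.restrict (Set.Ioi τ₀)),
        LipschitzOnWith (Real.nnabs (bound a)) (fun x => Hd ξd x a * f a) (Metric.ball τ 1) := by
      refine Filter.Eventually.of_forall fun a => ?_
      refine LipschitzOnWith.of_dist_le_mul fun x hx y hy => ?_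
      rw [Metric.mem_ball, Real.dist_eq] at hx hy
      have hcx : μ * |τ - a| - μ ≤ μ * |x - a| := by
        have h1 : |τ - a| - |x - a| ≤ |τ - x| := by
          have := abs_abs_sub_abs_le_abs_sub (τ - a) (x - a)
          have h2 : (τ - a) - (x - a) = τ - x := by ring
          rw [h2] at this
          calc |τ - a| - |x - a| ≤ |(|τ - a| - |x - a|)| := le_abs_self _
            _ ≤ |τ - x| := this
        have h3 : |τ - x| ≤ 1 := by rw [abs_sub_comm]; linarith
        nlinarith
      have hcy : μ * |τ - a| - μ ≤ μ * |y - a| := by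
        have h1 : |τ - a| - |y - a| ≤ |τ - y| := by
          have := abs_abs_sub_abs_le_abs_sub (τ - a) (y - a)
          have h2 : (τ - a) - (y - a) = τ - y := by ring
          rw [h2] at this
          calc |τ - a| - |y - a| ≤ |(|τ - a| - |y - a|)| := le_abs_self _
            _ ≤ |τ - y| := this
        have h3 : |τ - y| ≤ 1 := by rw [abs_sub_comm]; linarith
        nlinarith
      have hlipexp := exp_lip_aux hcx hcy
      have habsle : |(μ * |x - a| - μ * |y - a|)| ≤ μ * |x - y| := by
        have h1 := abs_abs_sub_abs_le_abs_sub (x - a) (y - a)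
        have h2 : (x - a) - (y - a) = x - y := by ring
        rw [h2] at h1
        rw [← mul_sub, abs_mul, abs_of_nonneg hμ.le]
        exact mul_le_mul_of_nonneg_left h1 hμ.le
      have hexpc : Real.exp (-(μ * |τ - a| - μ)) = Real.exp μ * Real.exp (-μ * |τ - a|) := by
        rw [← Real.exp_add]
        ring_nf
      rw [Real.dist_eq, Real.dist_eq, hHd, hHd]
      have heq1 : -A * Real.exp (-μ * |x - a|) * f a - -A * Real.exp (-μ * |y - a|) * f a
          = (-A * f a) * (Real.exp (-(μ * |x - a|)) - Real.exp (-(μ * |y - a|))) := by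
        rw [neg_mul μ, neg_mul μ]
        ring
      rw [heq1, abs_mul, Real.coe_nnabs]
      have hd2 : |Real.exp (-(μ * |x - a|)) - Real.exp (-(μ * |y - a|))|
          ≤ (Real.exp μ * Real.exp (-μ * |τ - a|)) * (μ * |x - y|) := by
        calc |Real.exp (-(μ * |x - a|)) - Real.exp (-(μ * |y - a|))|
            ≤ Real.exp (-(μ * |τ - a| - μ)) * |(μ * |x - a| - μ * |y - a|)| := hlipexp
          _ ≤ Real.exp (-(μ * |τ - a| - μ)) * (μ * |x - y|) :=
              mul_le_mul_of_nonneg_left habsle (Real.exp_nonneg _)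
          _ = (Real.exp μ * Real.exp (-μ * |τ - a|)) * (μ * |x - y|) := by rw [hexpc]
      have hbnn : |bound a| = A * μ * Real.exp μ * Real.exp (-μ * |τ - a|) * |f a| := by
        rw [hbdef]
        exact abs_of_nonneg (by positivity)
      rw [hbnn]
      have hAf : |(-A * f a)| = A * |f a| := by
        rw [abs_mul, abs_neg, abs_of_nonneg hA.le]
      rw [hAf]
      calc A * |f a| * |Real.exp (-(μ * |x - a|)) - Real.exp (-(μ * |y - a|))|
          ≤ A * |f a| * ((Real.exp μ * Real.exp (-μ * |τ - a|)) * (μ * |x - y|)) :=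
            mul_le_mul_of_nonneg_left hd2 (by positivity)
        _ = A * μ * Real.exp μ * Real.exp (-μ * |τ - a|) * |f a| * |x - y| := by ring
    have h_diff : ∀ᵐ a ∂(volume.restrict (Set.Ioi τ₀)),
        HasDerivAt (fun x => Hd ξd x a * f a) (g a) τ := by
      have hane : ∀ᵐ a ∂(volume.restrict (Set.Ioi τ₀)), a ≠ τ := by
        refine ae_restrict_of_ae ?_
        rw [ae_iff]
        have : {a : ℝ | ¬a ≠ τ} = {τ} := by ext a; simp
        rw [this]
        exact Real.volume_singleton
      refine hane.mono fun a ha => ?_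
      rcases lt_or_gt_of_ne ha with hlt | hgt
      · -- a < τ
        have hev : (fun x => Hd ξd x a * f a)
            =ᶠ[nhds τ] fun x => (-A * Real.exp (-μ * (x - a))) * f a := by
          filter_upwards [Ioi_mem_nhds hlt] with x hx
          rw [hHd, abs_of_nonneg (by rw [Set.mem_Ioi] at hx; linarith)]
        have hdd := ((((hasDerivAt_id τ).sub_const a).const_mul (-μ)).exp.const_mul
          (-A)).mul_const (f a)
        have := hdd.congr_of_eventuallyEq hev
        refine this.congr_deriv ?_
        rw [hgdef]
        simp only [if_pos hlt]
        rw [abs_of_nonneg (by linarith : (0:ℝ) ≤ τ - a)]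
        simp only [id_eq]
        ring_nf
      · -- τ < a
        have hev : (fun x => Hd ξd x a * f a)
            =ᶠ[nhds τ] fun x => (-A * Real.exp (-μ * (a - x))) * f a := by
          filter_upwards [Iio_mem_nhds hgt] with x hx
          rw [hHd, abs_of_nonpos (by rw [Set.mem_Iio] at hx; linarith)]
          ring_nf
        have hdd := ((((hasDerivAt_id τ).const_sub a).const_mul (-μ)).exp.const_mul
          (-A)).mul_const (f a)
        have := hdd.congr_of_eventuallyEq hev
        refine this.congr_deriv ?_
        rw [hgdef]
        have hnlt : ¬(a < τ) := not_lt.2 hgt.le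
        simp only [if_neg hnlt]
        rw [abs_of_nonpos (by linarith : τ - a ≤ 0)]
        simp only [id_eq]
        ring_nf
    have hmain := hasDerivAt_integral_of_dominated_loc_of_lip (F := fun x a => Hd ξd x a * f a)
      (F' := g) (x₀ := τ) (bound := bound) (Metric.ball_mem_nhds τ zero_lt_one)
      (Filter.Eventually.of_forall hmeasF) hF_int hg_meas h_lip hbound_int h_diff
    have hderiv : deriv (Hdop ξd τ₀ f) τ = ∫ a in Set.Ioi τ₀, g a := by
      refine HasDerivAt.deriv ?_
      exact hmain.2
    rw [hderiv]
    have habs : |∫ a in Set.Ioi τ₀, g a| ≤ (A * μ) * (K * M * τ ^ (-β)) := by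
      have h1 : |∫ a in Set.Ioi τ₀, g a| ≤ ∫ a in Set.Ioi τ₀, ‖g a‖ := by
        have hn := norm_integral_le_integral_norm (μ := volume.restrict (Set.Ioi τ₀)) (f := g)
        rw [Real.norm_eq_abs] at hn
        exact hn
      have h2 : (∫ a in Set.Ioi τ₀, ‖g a‖)
          = ∫ a in Set.Ioi τ₀, (A * μ) * (Real.exp (-μ * |τ - a|) * |f a|) := by
        refine integral_congr_ae (Filter.Eventually.of_forall fun a => ?_)
        dsimp only
        rw [Real.norm_eq_abs, hgdef]
        rcases lt_or_ge a τ with h | h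
        · simp only [if_pos h, one_mul]
          rw [abs_mul, abs_mul, abs_mul, abs_of_nonneg hA.le, abs_of_nonneg hμ.le,
            abs_of_nonneg (Real.exp_nonneg _)]
          ring
        · simp only [if_neg (not_lt.2 h)]
          rw [abs_mul, abs_mul, abs_mul, abs_mul, abs_neg, abs_one,
            abs_of_nonneg hA.le, abs_of_nonneg hμ.le, abs_of_nonneg (Real.exp_nonneg _)]
          ring
      have h3 : (∫ a in Set.Ioi τ₀, (A * μ) * (Real.exp (-μ * |τ - a|) * |f a|))
          = (A * μ) * ∫ a in Set.Ioi τ₀, Real.exp (-μ * |τ - a|) * |f a| := by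
        rw [MeasureTheory.integral_const_mul]
      rw [h2, h3] at h1
      exact h1.trans (mul_le_mul_of_nonneg_left (hKf τ hτ) (by positivity))
    have hτβ : 0 < τ ^ β := Real.rpow_pos_of_pos hτpos β
    have hmul := mul_le_mul_of_nonneg_left habs hτβ.le
    have heq : τ ^ β * ((A * μ) * (K * M * τ ^ (-β))) = A * μ * K * M := by
      rw [Real.rpow_neg hτpos.le]
      field_simp
    rw [heq] at hmul
    calc τ ^ β * |∫ a in Set.Ioi τ₀, g a| ≤ A * μ * K * M := hmul
      _ ≤ A * K * (1 + μ) * M := by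
          nlinarith [mul_nonneg (mul_nonneg hA.le hK0) hM0]

end
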